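/- There exists an absolute constant C > 0 such that the following holds for all n ≥ 2, k, t. Let A_1, …, A_k ∈ {0,1}^{n×n} be matrices each of whose rows and columns contains at most t ones, and let ψ : ℝ^n → ℝ^k be the quadratic map with coordinates ψ_i(x) = ⟨A_i x, x⟩. Then gw(ψ({0,1}^n)) ≤ C · t n · √(k log n). -/

import Mathlib

open MeasureTheory ProbabilityTheory Matrix Real
open scoped ENNReal NNReal

namespace QGW


lemma gauss_eq_density : gaussianReal 0 1
    = MeasureTheory.volume.withDensity (fun x => ((gaussianPDFReal 0 1 x).toNNReal : ℝ≥0∞)) := by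
  rw [gaussianReal_of_var_ne_zero 0 one_ne_zero]
  rfl

lemma pdf_meas : AEMeasurable (fun x => (gaussianPDFReal 0 1 x).toNNReal) (volume : Measure ℝ) :=
  (measurable_gaussianPDFReal 0 1).real_toNNReal.aemeasurable

lemma pdf_mul_exp (c : ℝ) : (fun x => gaussianPDFReal 0 1 x * Real.exp (c * x))
    = fun x => Real.exp (c ^ 2 / 2) * gaussianPDFReal c 1 x := by
  funext x
  simp only [gaussianPDFReal, NNReal.coe_one, mul_one, sub_zero]
  rw [mul_assoc, ← Real.exp_add, mul_comm (Real.exp (c ^ 2 / 2)), mul_assoc, ← Real.exp_add]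
  congr 1
  ring

lemma integral_exp_gauss (c : ℝ) :
    ∫ x, Real.exp (c * x) ∂(gaussianReal 0 1) = Real.exp (c ^ 2 / 2) := by
  rw [gauss_eq_density, integral_withDensity_eq_integral_smul₀ pdf_meas]
  have h1 : (fun x => (gaussianPDFReal 0 1 x).toNNReal • Real.exp (c * x))
      = fun x => Real.exp (c ^ 2 / 2) * gaussianPDFReal c 1 x := by
    rw [← pdf_mul_exp c]
    funext x
    rw [NNReal.smul_def, Real.coe_toNNReal _ (gaussianPDFReal_nonneg 0 1 x), smul_eq_mul]
  rw [h1, integral_const_mul, integral_gaussianPDFReal_eq_one c one_ne_zero, mul_one]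

lemma integrable_exp_gauss (c : ℝ) :
    Integrable (fun x => Real.exp (c * x)) (gaussianReal 0 1) := by
  rw [gauss_eq_density, integrable_withDensity_iff_integrable_smul₀ pdf_meas]
  have h1 : (fun x => (gaussianPDFReal 0 1 x).toNNReal • Real.exp (c * x))
      = fun x => Real.exp (c ^ 2 / 2) * gaussianPDFReal c 1 x := by
    rw [← pdf_mul_exp c]
    funext x
    rw [NNReal.smul_def, Real.coe_toNNReal _ (gaussianPDFReal_nonneg 0 1 x), smul_eq_mul]
  rw [h1]
  exact (integrable_gaussianPDFReal c 1).const_mul _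

lemma abs_pow_le_exp (m : ℕ) (y : ℝ) :
    |y| ^ m ≤ (m.factorial : ℝ) * (Real.exp y + Real.exp (-y)) := by
  have h1 : |y| ^ m / (m.factorial : ℝ) ≤ Real.exp |y| := by
    refine le_trans ?_ (Real.sum_le_exp_of_nonneg (abs_nonneg y) (m + 1))
    refine Finset.single_le_sum (f := fun i => |y| ^ i / (i.factorial : ℝ)) ?_ ?_
    · intro i _; positivity
    · simp [Finset.mem_range]
  have h2 : Real.exp |y| ≤ Real.exp y + Real.exp (-y) := by
    rcases abs_cases y with ⟨h, _⟩ | ⟨h, _⟩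
    · rw [h]; nlinarith [Real.exp_pos (-y)]
    · rw [h]; nlinarith [Real.exp_pos y]
  have hfac : (0:ℝ) < (m.factorial : ℝ) := by positivity
  calc |y| ^ m = (m.factorial : ℝ) * (|y| ^ m / (m.factorial : ℝ)) := by field_simp
  _ ≤ (m.factorial : ℝ) * Real.exp |y| := by
      exact mul_le_mul_of_nonneg_left h1 hfac.le
  _ ≤ (m.factorial : ℝ) * (Real.exp y + Real.exp (-y)) := by
      exact mul_le_mul_of_nonneg_left h2 hfac.le

lemma integrable_pow_gauss (m : ℕ) :
    Integrable (fun x : ℝ => x ^ m) (gaussianReal 0 1) := by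
  have hint : Integrable (fun x : ℝ => (m.factorial : ℝ) * (Real.exp x + Real.exp (-x)))
      (gaussianReal 0 1) := by
    have := ((integrable_exp_gauss 1).add (integrable_exp_gauss (-1))).const_mul
      (m.factorial : ℝ)
    simpa using this
  refine hint.mono' ((measurable_id.pow_const m).aestronglyMeasurable) ?_
  refine ae_of_all _ (fun x => ?_)
  rw [Real.norm_eq_abs, abs_pow]
  have := abs_pow_le_exp m x
  exact this

lemma gauss_map_neg : (gaussianReal 0 1).map (fun x => (-1 : ℝ) * x) = gaussianReal 0 1 := by
  rw [gaussianReal_map_const_mul]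
  have h : (⟨(-1:ℝ)^2, sq_nonneg _⟩ : ℝ≥0) = 1 := by ext; norm_num
  congr 1
  · norm_num
  · ext; norm_num

lemma moment_nonneg (m : ℕ) : 0 ≤ ∫ x, x ^ m ∂(gaussianReal 0 1) := by
  rcases Nat.even_or_odd m with he | ho
  · exact integral_nonneg (fun x => he.pow_nonneg x)
  · have h1 : ∫ x, x ^ m ∂(gaussianReal 0 1)
        = ∫ x, ((-1 : ℝ) * x) ^ m ∂(gaussianReal 0 1) := by
      conv_lhs => rw [← gauss_map_neg]
      rw [integral_map (by fun_prop) (by fun_prop)]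
    have h2 : ∀ x : ℝ, ((-1 : ℝ) * x) ^ m = -(x ^ m) := by
      intro x
      rw [mul_pow, ho.neg_one_pow]
      ring
    simp only [h2, integral_neg] at h1
    linarith



lemma integrable_prod_gauss : ∀ {k : ℕ} {f : Fin k → ℝ → ℝ},
    (∀ i, Integrable (f i) (gaussianReal 0 1)) →
    Integrable (fun x : Fin k → ℝ => ∏ i, f i (x i))
      (Measure.pi fun _ : Fin k => gaussianReal 0 1) := by
  intro k
  induction k with
  | zero =>
      intro f _
      simp only [Finset.univ_eq_empty, Finset.prod_empty]
      exact integrable_const 1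
  | succ m ih =>
      intro f hf
      have hmp := (measurePreserving_piFinSuccAbove
        (fun _ : Fin (m + 1) => gaussianReal 0 1) 0).symm
      rw [← hmp.integrable_comp_emb (MeasurableEquiv.measurableEmbedding _)]
      simp_rw [MeasurableEquiv.piFinSuccAbove_symm_apply, Fin.insertNthEquiv,
        Fin.prod_univ_succ, Fin.insertNth_zero]
      simp only [Fin.zero_succAbove, Function.comp_def, Fin.cons_zero, Fin.cons_succ,
        Equiv.coe_fn_mk]
      exact Integrable.mul_prod (hf 0) (ih (fun i => hf _))

lemma integral_prod_gauss : ∀ {k : ℕ} (f : Fin k → ℝ → ℝ),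
    ∫ x : Fin k → ℝ, ∏ i, f i (x i) ∂(Measure.pi fun _ : Fin k => gaussianReal 0 1)
      = ∏ i, ∫ x, f i x ∂(gaussianReal 0 1) := by
  intro k
  induction k with
  | zero =>
      intro f
      simp
  | succ m ih =>
      intro f
      have hmp := (measurePreserving_piFinSuccAbove
        (fun _ : Fin (m + 1) => gaussianReal 0 1) 0).symm
      calc
        _ = ∫ x : ℝ × (Fin m → ℝ),
            f 0 x.1 * ∏ i : Fin m, f i.succ (x.2 i)
            ∂((gaussianReal 0 1).prod (Measure.pi fun _ : Fin m => gaussianReal 0 1)) := by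
          rw [← hmp.integral_comp']
          congr 1
          funext x
          simp_rw [MeasurableEquiv.piFinSuccAbove_symm_apply, Fin.insertNthEquiv,
            Fin.prod_univ_succ, Fin.insertNth_zero]
          simp only [Fin.zero_succAbove, Function.comp_def, Fin.cons_zero, Fin.cons_succ,
            Equiv.coe_fn_mk, cast_eq]
        _ = (∫ x, f 0 x ∂(gaussianReal 0 1)) * ∏ i : Fin m, ∫ x, f i.succ x ∂(gaussianReal 0 1) := by
          rw [← ih fun i => f i.succ, ← integral_prod_mul]
        _ = ∏ i, ∫ x, f i x ∂(gaussianReal 0 1) := by rw [Fin.prod_univ_succ]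



variable {n : ℕ}

lemma dot_nonneg (x : Fin n → ℝ) : 0 ≤ x ⬝ᵥ x :=
  Finset.sum_nonneg fun i _ => mul_self_nonneg _

lemma cs_step (P : Matrix (Fin n) (Fin n) ℝ) (hP : Pᵀ = P) (x : Fin n → ℝ) :
    (x ⬝ᵥ P.mulVec x) ^ 2 ≤ (x ⬝ᵥ x) * (x ⬝ᵥ (P * P).mulVec x) := by
  have h := Finset.sum_mul_sq_le_sq_mul_sq Finset.univ x (P.mulVec x)
  have h1 : x ⬝ᵥ P.mulVec x = ∑ i, x i * P.mulVec x i := rfl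
  have h2 : x ⬝ᵥ x = ∑ i, x i ^ 2 := by
    simp [dotProduct, sq]
  have h3 : x ⬝ᵥ (P * P).mulVec x = ∑ i, (P.mulVec x i) ^ 2 := by
    have hv : (P * P).mulVec x = P.mulVec (P.mulVec x) := by
      rw [← Matrix.mulVec_mulVec]
    rw [hv, Matrix.dotProduct_mulVec]
    have hvm : x ᵥ* P = P.mulVec x := by
      conv_lhs => rw [← hP]
      exact Matrix.vecMul_transpose P x
    rw [hvm]
    simp [dotProduct, sq]
  rw [h1, h2, h3]
  exact h

lemma cs_iter (M : Matrix (Fin n) (Fin n) ℝ) (hM : Mᵀ = M) (x : Fin n → ℝ) :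
    ∀ q : ℕ, 1 ≤ q →
      (x ⬝ᵥ M.mulVec x) ^ (2 ^ q) ≤ (x ⬝ᵥ x) ^ (2 ^ q - 1) * (x ⬝ᵥ (M ^ (2 ^ q)).mulVec x) := by
  intro q
  induction q with
  | zero => intro h; omega
  | succ q ih =>
      intro _
      rcases Nat.eq_zero_or_pos q with hq | hq
      · subst hq
        have := cs_step M hM x
        simpa [pow_one, sq] using this
      have hih := ih hq
      have hnn : (0:ℝ) ≤ (x ⬝ᵥ M.mulVec x) ^ (2 ^ q) := by
        have : Even (2 ^ q) := (Nat.even_pow).mpr ⟨even_two, by omega⟩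
        exact this.pow_nonneg _
      have hsq : ((x ⬝ᵥ M.mulVec x) ^ (2 ^ q)) ^ 2
          ≤ ((x ⬝ᵥ x) ^ (2 ^ q - 1) * (x ⬝ᵥ (M ^ (2 ^ q)).mulVec x)) ^ 2 :=
        pow_le_pow_left₀ hnn hih 2
      have hMq : (M ^ (2 ^ q))ᵀ = M ^ (2 ^ q) := by
        rw [Matrix.transpose_pow, hM]
      have hcs := cs_step (M ^ (2 ^ q)) hMq x
      have hMM : (M ^ (2 ^ q)) * (M ^ (2 ^ q)) = M ^ (2 ^ (q + 1)) := by
        rw [← pow_add]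
        congr 1
        omega
      rw [hMM] at hcs
      calc (x ⬝ᵥ M.mulVec x) ^ (2 ^ (q + 1))
          = ((x ⬝ᵥ M.mulVec x) ^ (2 ^ q)) ^ 2 := by
            rw [← pow_mul, pow_succ 2 q]
        _ ≤ ((x ⬝ᵥ x) ^ (2 ^ q - 1) * (x ⬝ᵥ (M ^ (2 ^ q)).mulVec x)) ^ 2 := hsq
        _ = ((x ⬝ᵥ x) ^ (2 ^ q - 1)) ^ 2 * (x ⬝ᵥ (M ^ (2 ^ q)).mulVec x) ^ 2 := by
            rw [mul_pow]
        _ ≤ ((x ⬝ᵥ x) ^ (2 ^ q - 1)) ^ 2 *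
              ((x ⬝ᵥ x) * (x ⬝ᵥ (M ^ (2 ^ (q + 1))).mulVec x)) :=
            mul_le_mul_of_nonneg_left hcs (pow_nonneg (pow_nonneg (dot_nonneg x) _) 2)
        _ = (x ⬝ᵥ x) ^ (2 ^ (q + 1) - 1) * (x ⬝ᵥ (M ^ (2 ^ (q + 1))).mulVec x) := by
            rw [← pow_mul, ← mul_assoc, ← pow_succ]
            have h2q : 1 ≤ 2 ^ q := Nat.one_le_two_pow
            have hp : 2 ^ (q + 1) = 2 * 2 ^ q := by rw [pow_succ]; ring
            congr 2
            omega

lemma quad_le_trace (P : Matrix (Fin n) (Fin n) ℝ) (x : Fin n → ℝ) :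
    x ⬝ᵥ (Pᵀ * P).mulVec x ≤ (x ⬝ᵥ x) * (Pᵀ * P).trace := by
  have hv : (Pᵀ * P).mulVec x = Pᵀ.mulVec (P.mulVec x) := by
    rw [← Matrix.mulVec_mulVec]
  have h1 : x ⬝ᵥ (Pᵀ * P).mulVec x = (P.mulVec x) ⬝ᵥ (P.mulVec x) := by
    rw [hv, Matrix.dotProduct_mulVec, Matrix.vecMul_transpose]
  have h2 : (Pᵀ * P).trace = ∑ c, ∑ r, (P r c) ^ 2 := by
    simp [Matrix.trace, Matrix.diag, Matrix.mul_apply, sq]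
  rw [h1, h2]
  have h3 : (P.mulVec x) ⬝ᵥ (P.mulVec x) = ∑ r, (∑ c, P r c * x c) ^ 2 := by
    simp [dotProduct, Matrix.mulVec, sq]
  rw [h3]
  have h4 : ∀ r : Fin n, (∑ c, P r c * x c) ^ 2 ≤ (∑ c, (P r c) ^ 2) * (x ⬝ᵥ x) := by
    intro r
    have := Finset.sum_mul_sq_le_sq_mul_sq Finset.univ (fun c => P r c) x
    have hxx : x ⬝ᵥ x = ∑ c, x c ^ 2 := by simp [dotProduct, sq]
    rw [hxx]
    exact this
  calc ∑ r, (∑ c, P r c * x c) ^ 2 ≤ ∑ r, (∑ c, (P r c) ^ 2) * (x ⬝ᵥ x) :=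
        Finset.sum_le_sum fun r _ => h4 r
    _ = (x ⬝ᵥ x) * ∑ c, ∑ r, (P r c) ^ 2 := by
        rw [← Finset.sum_mul, mul_comm, Finset.sum_comm]

lemma listprod_rowsum (c : ℝ) (hc : 0 ≤ c) :
    ∀ L : List (Matrix (Fin n) (Fin n) ℝ),
      (∀ B ∈ L, (∀ r cl, 0 ≤ B r cl) ∧ ∀ r, ∑ cl, B r cl ≤ c) →
      (∀ r cl, 0 ≤ L.prod r cl) ∧ ∀ r, ∑ cl, L.prod r cl ≤ c ^ L.length := by
  intro L
  induction L with
  | nil =>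
      intro _
      constructor
      · intro r cl
        by_cases h : r = cl <;> simp [List.prod_nil, Matrix.one_apply, h]
      · intro r
        simp [List.prod_nil, Matrix.one_apply]
  | cons B L ih =>
      intro hmem
      have hB := hmem B List.mem_cons_self
      have hL := ih (fun B' hB' => hmem B' (List.mem_cons_of_mem _ hB'))
      have hprod : (B :: L).prod = B * L.prod := List.prod_cons
      constructor
      · intro r cl
        rw [hprod, Matrix.mul_apply]
        exact Finset.sum_nonneg fun j _ => mul_nonneg (hB.1 r j) (hL.1 j cl)
      · intro r
        rw [hprod]
        have : ∑ cl, (B * L.prod) r cl = ∑ j, B r j * ∑ cl, L.prod j cl := by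
          simp_rw [Matrix.mul_apply, Finset.mul_sum]
          rw [Finset.sum_comm]
        rw [this]
        calc ∑ j, B r j * ∑ cl, L.prod j cl
            ≤ ∑ j, B r j * c ^ L.length :=
              Finset.sum_le_sum fun j _ =>
                mul_le_mul_of_nonneg_left (hL.2 j) (hB.1 r j)
          _ = (∑ j, B r j) * c ^ L.length := by rw [Finset.sum_mul]
          _ ≤ c * c ^ L.length :=
              mul_le_mul_of_nonneg_right (hB.2 r) (pow_nonneg hc _)
          _ = c ^ (B :: L).length := by
              rw [List.length_cons, pow_succ]
              ring

lemma pow_expand {k : ℕ} (S : Fin k → Matrix (Fin n) (Fin n) ℝ) (g : Fin k → ℝ) :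
    ∀ m : ℕ, (∑ i, g i • S i) ^ m
      = ∑ f : Fin m → Fin k, (∏ j, g (f j)) • (List.ofFn fun j => S (f j)).prod := by
  intro m
  induction m with
  | zero =>
      rw [pow_zero]
      rw [Finset.sum_eq_single (fun x : Fin 0 => x.elim0)]
      · simp [List.ofFn_zero]
      · intro f _ hf
        exact absurd (funext fun x => x.elim0) hf
      · intro h
        exact absurd (Finset.mem_univ _) h
  | succ m ih =>
      rw [pow_succ', ih, Finset.mul_sum]
      rw [← (Fin.consEquiv (fun _ : Fin (m + 1) => Fin k)).sum_comp
        (fun f : Fin (m + 1) → Fin k => (∏ j, g (f j)) • (List.ofFn fun j => S (f j)).prod)]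
      rw [Fintype.sum_prod_type]
      rw [Finset.sum_comm]
      congr 1
      funext f
      rw [Finset.sum_mul]
      refine Finset.sum_congr rfl fun x _ => ?_
      simp only [Fin.consEquiv, Equiv.coe_fn_mk, Fin.prod_univ_succ, Fin.cons_zero,
        Fin.cons_succ, List.ofFn_succ, List.prod_cons, Matrix.smul_mul, Matrix.mul_smul,
        smul_smul]
      rw [mul_comm]



lemma rpow_root_le {y v : ℝ} (hy : 0 ≤ y) (hv : 0 < v) {N : ℕ} (hN : 1 ≤ N) :
    y ^ ((N : ℝ)⁻¹) ≤ v ^ ((N : ℝ)⁻¹) * (1 - (N:ℝ)⁻¹) + v ^ ((N : ℝ)⁻¹) / (v * N) * y := by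
  have hNpos : (0:ℝ) < N := by
    have : 0 < N := by omega
    exact_mod_cast this
  have hNne : (N:ℝ) ≠ 0 := hNpos.ne'
  set z : ℝ := y / v with hz
  have hz0 : 0 ≤ z := div_nonneg hy hv.le
  have hstep : -(1 / (N:ℝ)) ≤ (z - 1) / N := by
    have h0 : ((0:ℝ) - 1) / N ≤ (z - 1) / N :=
      (div_le_div_iff_of_pos_right hNpos).mpr (by linarith)
    have : ((0:ℝ) - 1) / N = -(1 / (N:ℝ)) := by ring
    linarith
  have hinv1 : 1 / (N:ℝ) ≤ 1 := by
    rw [div_le_one hNpos]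
    exact_mod_cast hN
  have ha2 : (-2 : ℝ) ≤ (z - 1) / N := by linarith
  have h1a : (0:ℝ) ≤ 1 + (z - 1) / N := by linarith
  have hbern := one_add_mul_le_pow ha2 N
  have hzle : z ≤ (1 + (z - 1) / N) ^ N := by
    have heq : 1 + (N:ℝ) * ((z - 1) / N) = z := by field_simp; ring
    linarith [hbern]
  have hroot : z ^ ((N:ℝ)⁻¹) ≤ 1 + (z - 1) / N := by
    calc z ^ ((N:ℝ)⁻¹) ≤ ((1 + (z - 1) / N) ^ N) ^ ((N:ℝ)⁻¹) :=
          Real.rpow_le_rpow hz0 hzle (inv_nonneg.mpr hNpos.le)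
      _ = 1 + (z - 1) / N := Real.pow_rpow_inv_natCast h1a (by omega)
  have hy_eq : y = v * z := by
    rw [hz]
    field_simp
  have hmul : y ^ ((N:ℝ)⁻¹) = v ^ ((N:ℝ)⁻¹) * z ^ ((N:ℝ)⁻¹) := by
    rw [hy_eq, Real.mul_rpow hv.le hz0]
  have hfin : v ^ ((N:ℝ)⁻¹) * (1 + (z - 1) / N)
      = v ^ ((N:ℝ)⁻¹) * (1 - (N:ℝ)⁻¹) + v ^ ((N:ℝ)⁻¹) / (v * N) * y := by
    rw [hz]
    field_simp
    ring
  rw [hmul, ← hfin]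
  exact mul_le_mul_of_nonneg_left hroot (Real.rpow_nonneg hv.le _)

lemma integral_root_le {α : Type*} [MeasurableSpace α] {μ : Measure α} [IsProbabilityMeasure μ]
    {Y : α → ℝ} (hY : Integrable Y μ) (hY0 : ∀ a, 0 ≤ Y a) {V : ℝ} (hV : 0 < V)
    (hIV : ∫ a, Y a ∂μ ≤ V) {N : ℕ} (hN : 1 ≤ N) :
    Integrable (fun a => (Y a) ^ ((N:ℝ)⁻¹)) μ ∧
      ∫ a, (Y a) ^ ((N:ℝ)⁻¹) ∂μ ≤ V ^ ((N:ℝ)⁻¹) := by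
  have hNpos : (0:ℝ) < N := by
    have : 0 < N := by omega
    exact_mod_cast this
  set c := V ^ ((N:ℝ)⁻¹) with hc
  have hc0 : 0 ≤ c := Real.rpow_nonneg hV.le _
  have hbound : ∀ a, (Y a) ^ ((N:ℝ)⁻¹) ≤ c * (1 - (N:ℝ)⁻¹) + c / (V * N) * Y a :=
    fun a => rpow_root_le (hY0 a) hV hN
  have hint2 : Integrable (fun a => c * (1 - (N:ℝ)⁻¹) + c / (V * N) * Y a) μ :=
    (integrable_const _).add (hY.const_mul _)
  have hcont : Continuous fun t : ℝ => t ^ ((N:ℝ)⁻¹) :=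
    continuous_iff_continuousAt.mpr fun x =>
      Real.continuousAt_rpow_const x _ (Or.inr (inv_nonneg.mpr hNpos.le))
  have hmeas : AEStronglyMeasurable (fun a => (Y a) ^ ((N:ℝ)⁻¹)) μ :=
    hcont.comp_aestronglyMeasurable hY.aestronglyMeasurable
  have hint1 : Integrable (fun a => (Y a) ^ ((N:ℝ)⁻¹)) μ := by
    refine hint2.mono' hmeas (ae_of_all _ fun a => ?_)
    rw [Real.norm_eq_abs, abs_of_nonneg (Real.rpow_nonneg (hY0 a) _)]
    exact hbound a
  refine ⟨hint1, ?_⟩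
  have h1 : ∫ a, (Y a) ^ ((N:ℝ)⁻¹) ∂μ ≤ ∫ a, (c * (1 - (N:ℝ)⁻¹) + c / (V * N) * Y a) ∂μ :=
    integral_mono hint1 hint2 hbound
  have h2 : ∫ a, (c * (1 - (N:ℝ)⁻¹) + c / (V * N) * Y a) ∂μ
      = c * (1 - (N:ℝ)⁻¹) + c / (V * N) * ∫ a, Y a ∂μ := by
    rw [integral_add (integrable_const _) (hY.const_mul _), integral_const,
      integral_const_mul]
    simp
  have h3 : c / (V * N) * ∫ a, Y a ∂μ ≤ c / (V * N) * V :=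
    mul_le_mul_of_nonneg_left hIV (by positivity)
  have h4 : c * (1 - (N:ℝ)⁻¹) + c / (V * N) * V = c := by
    field_simp
    ring
  linarith [h1, h2 ▸ h1, h3]

lemma pow_le_exp_pair {N : ℕ} (hN : Even N) {lam : ℝ} (hl : 0 < lam) (z : ℝ) :
    z ^ N ≤ (N.factorial : ℝ) / lam ^ N * (Real.exp (lam * z) + Real.exp (-(lam * z))) := by
  have h1 : z ^ N = |z| ^ N := (hN.pow_abs z).symm
  have h2 : (lam * |z|) ^ N / (N.factorial : ℝ) ≤ Real.exp (lam * |z|) := by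
    refine le_trans ?_ (Real.sum_le_exp_of_nonneg (by positivity) (N + 1))
    refine Finset.single_le_sum (f := fun i => (lam * |z|) ^ i / (i.factorial : ℝ)) ?_ ?_
    · intro i _; positivity
    · simp [Finset.mem_range]
  have h3 : Real.exp (lam * |z|) ≤ Real.exp (lam * z) + Real.exp (-(lam * z)) := by
    rcases abs_cases z with ⟨h, _⟩ | ⟨h, _⟩
    · rw [h]; nlinarith [Real.exp_pos (-(lam * z))]
    · rw [h, mul_neg]
      nlinarith [Real.exp_pos (lam * z)]
  have hfac : (0:ℝ) < (N.factorial : ℝ) := by positivity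
  have hlamN : (0:ℝ) < lam ^ N := by positivity
  have h4 : (lam * |z|) ^ N = lam ^ N * |z| ^ N := mul_pow _ _ _
  have h2' : (lam * |z|) ^ N ≤ Real.exp (lam * |z|) * (N.factorial : ℝ) :=
    (div_le_iff₀ hfac).mp h2
  rw [h1, div_mul_eq_mul_div, le_div_iff₀ hlamN]
  nlinarith [mul_le_mul_of_nonneg_right h3 hfac.le]

lemma sum_le_of_01 {n t : ℕ} {v : Fin n → ℝ} (h01 : ∀ c, v c = 0 ∨ v c = 1)
    (hc : Nat.card {c | v c = 1} ≤ t) : ∑ c, v c ≤ (t : ℝ) := by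
  classical
  have hsub : ∑ c, v c = ∑ c ∈ Finset.univ.filter (fun c => v c = 1), v c := by
    refine (Finset.sum_subset (Finset.filter_subset _ _) ?_).symm
    intro x _ hx
    rcases h01 x with h | h
    · exact h
    · exact absurd (Finset.mem_filter.mpr ⟨Finset.mem_univ x, h⟩) hx
  have hval : ∑ c ∈ Finset.univ.filter (fun c => v c = 1), v c
      = ((Finset.univ.filter (fun c => v c = 1)).card : ℝ) := by
    calc ∑ c ∈ Finset.univ.filter (fun c => v c = 1), v c
        = ∑ c ∈ Finset.univ.filter (fun c => v c = 1), (1:ℝ) :=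
          Finset.sum_congr rfl (fun x hx => (Finset.mem_filter.mp hx).2)
      _ = ((Finset.univ.filter (fun c => v c = 1)).card : ℝ) := by simp
  have hcard : (Finset.univ.filter (fun c => v c = 1)).card = Nat.card {c | v c = 1} := by
    rw [Nat.card_eq_card_toFinset]
    congr 1
    ext x
    simp [Set.mem_toFinset]
  rw [hsub, hval, hcard]
  exact_mod_cast hc


end QGW

set_option maxHeartbeats 1000000 in
open MeasureTheory ProbabilityTheory Matrix Real QGW in
/-- quadratic case.  There is an absolute constant `C > 0` such that
for all `n ≥ 2`, `k`, `t`: if `A_1, …, A_k ∈ {0,1}^{n×n}` have at most `t` ones in every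
row and in every column, and `ψ : ℝ^n → ℝ^k` has coordinates `ψ_i(x) = ⟨A_i x, x⟩`, then
`gw(ψ({0,1}^n)) ≤ C · t n · √(k log n)`. -/
theorem quadratic_gaussian_width :
    ∃ C : ℝ, 0 < C ∧
      ∀ n k t : ℕ, 2 ≤ n →
        ∀ A : Fin k → Matrix (Fin n) (Fin n) ℝ,
          (∀ i r c, A i r c = 0 ∨ A i r c = 1) →
          (∀ i r, Nat.card {c : Fin n | A i r c = 1} ≤ t) →
          (∀ i c, Nat.card {r : Fin n | A i r c = 1} ≤ t) →
          (∫ g : Fin k → ℝ,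
              (Finset.univ.sup' Finset.univ_nonempty fun x : Fin n → Bool =>
                ∑ i, (∑ r, ∑ c, A i r c * (if x c then (1 : ℝ) else 0) *
                  (if x r then (1 : ℝ) else 0)) * g i)
              ∂(Measure.pi fun _ : Fin k => gaussianReal 0 1)) ≤
            C * ((t : ℝ) * n) * Real.sqrt ((k : ℝ) * Real.log n) := by
  refine ⟨100, by norm_num, ?_⟩
  intro n k t hn2 A h01 hrow hcol
  haveI : NeZero n := ⟨by omega⟩
  set μ : Measure (Fin k → ℝ) := Measure.pi fun _ : Fin k => gaussianReal 0 1 with hμ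
  haveI : IsProbabilityMeasure μ := by rw [hμ]; infer_instance
  -- the integrand
  set F : (Fin n → Bool) → (Fin k → ℝ) → ℝ := fun x g =>
    ∑ i, (∑ r, ∑ c, A i r c * (if x c then (1 : ℝ) else 0) *
      (if x r then (1 : ℝ) else 0)) * g i with hF
  have hsqrt_nonneg : 0 ≤ Real.sqrt ((k : ℝ) * Real.log n) := Real.sqrt_nonneg _
  -- trivial case : all coefficients vanish
  by_cases htriv : k = 0 ∨ t = 0
  · have hF0 : ∀ x g, F x g = 0 := by
      intro x g
      rcases htriv with hk | ht
      · subst hk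
        simp [hF]
      · have hA0 : ∀ i r c, A i r c = 0 := by
          intro i r c
          rcases h01 i r c with h | h
          · exact h
          · exfalso
            have hne : Nonempty {c' : Fin n | A i r c' = 1} := ⟨⟨c, h⟩⟩
            have h1 := Nat.card_pos (α := {c' : Fin n | A i r c' = 1})
            have h2 := hrow i r
            omega
        simp [hF, hA0]
    have : (fun g => Finset.univ.sup' Finset.univ_nonempty fun x : Fin n → Bool => F x g)
        = fun _ => (0:ℝ) := by
      funext g
      rw [show (fun x : Fin n → Bool => F x g) = fun _ => (0:ℝ) from funext fun x => hF0 x g]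
      exact Finset.sup'_const _ _
    rw [hF] at this
    rw [this, integral_const, smul_eq_mul, mul_zero]
    positivity
  push_neg at htriv
  obtain ⟨hk0, ht0⟩ := htriv
  have hkpos : 0 < k := Nat.pos_of_ne_zero hk0
  have htpos : 0 < t := Nat.pos_of_ne_zero ht0
  -- choice of the even exponent N
  set L : ℕ := Nat.log 2 n with hLdef
  have hL1 : 1 ≤ L := Nat.log_pos one_lt_two hn2
  set Nh : ℕ := 2 ^ (Nat.log 2 L + 1) with hNhdef
  set N : ℕ := 2 * Nh with hNdef
  have hNhL : L < Nh := Nat.lt_pow_succ_log_self one_lt_two L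
  have hNh2L : Nh ≤ 2 * L := by
    have := Nat.pow_log_le_self 2 (by omega : L ≠ 0)
    calc Nh = 2 * 2 ^ (Nat.log 2 L) := by rw [hNhdef, pow_succ]; ring
      _ ≤ 2 * L := by omega
  have hN4L : N ≤ 4 * L := by omega
  have hNL : L + 1 ≤ N := by omega
  have hN1 : 1 ≤ N := by omega
  have hNne : N ≠ 0 := by omega
  have hNeven : Even N := ⟨Nh, by omega⟩
  have hNpow : N = 2 ^ (Nat.log 2 L + 2) := by
    rw [hNdef, hNhdef, pow_succ]
    ring
  have hNhalf : N = Nh + Nh := by omega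
  -- real log bounds
  have hn1R : (1:ℝ) < (n:ℝ) := by exact_mod_cast hn2
  have hlogn_pos : 0 < Real.log n := Real.log_pos hn1R
  have hlog2 : Real.log 2 < 1 := by
    have := Real.log_two_lt_d9
    linarith
  have hlog2' : (0.6931471803 : ℝ) < Real.log 2 := Real.log_two_gt_d9
  have hNge : Real.log n ≤ (N:ℝ) := by
    have h1 : (n:ℝ) ≤ ((2:ℕ):ℝ) ^ (L + 1) := by
      exact_mod_cast (Nat.lt_pow_succ_log_self one_lt_two n).le
    have h2 : Real.log n ≤ (L + 1 : ℝ) * Real.log 2 := by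
      calc Real.log n ≤ Real.log (((2:ℕ):ℝ) ^ (L + 1)) :=
            Real.log_le_log (by positivity) h1
        _ = (L + 1 : ℝ) * Real.log 2 := by
            rw [Real.log_pow]
            push_cast
            ring
    have h3 : (L + 1 : ℝ) * Real.log 2 ≤ (L + 1 : ℝ) := by
      nlinarith [hL1]
    have h4 : ((L:ℝ) + 1) ≤ (N:ℝ) := by exact_mod_cast hNL
    linarith
  have hNle : (N:ℝ) ≤ 6 * Real.log n := by
    have h1 : ((2:ℕ):ℝ) ^ L ≤ (n:ℝ) := by
      exact_mod_cast Nat.pow_log_le_self 2 (by omega : n ≠ 0)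
    have h2 : (L:ℝ) * Real.log 2 ≤ Real.log n := by
      calc (L:ℝ) * Real.log 2 = Real.log (((2:ℕ):ℝ) ^ L) := by
            rw [Real.log_pow]; push_cast; ring
        _ ≤ Real.log n := Real.log_le_log (by positivity) h1
    have h3 : (N:ℝ) ≤ 4 * (L:ℝ) := by exact_mod_cast hN4L
    nlinarith [hlog2', hlogn_pos]
  -- the symmetrized matrices
  set S : Fin k → Matrix (Fin n) (Fin n) ℝ := fun i => A i + (A i)ᵀ with hSdef
  have hS0 : ∀ i r c, 0 ≤ S i r c := by
    intro i r c
    have h1 : 0 ≤ A i r c := by rcases h01 i r c with h | h <;> simp [h]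
    have h2 : 0 ≤ A i c r := by rcases h01 i c r with h | h <;> simp [h]
    simp [hSdef, Matrix.add_apply, Matrix.transpose_apply]
    linarith
  have hSrow : ∀ i r, ∑ c, S i r c ≤ 2 * (t:ℝ) := by
    intro i r
    have h1 : ∑ c, A i r c ≤ (t:ℝ) := sum_le_of_01 (fun c => h01 i r c) (hrow i r)
    have h2 : ∑ c, A i c r ≤ (t:ℝ) := sum_le_of_01 (fun c => h01 i c r) (hcol i r)
    have : ∑ c, S i r c = (∑ c, A i r c) + ∑ c, A i c r := by
      rw [← Finset.sum_add_distrib]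
      refine Finset.sum_congr rfl fun c _ => ?_
      simp [hSdef, Matrix.add_apply, Matrix.transpose_apply]
    rw [this]
    linarith
  set M : (Fin k → ℝ) → Matrix (Fin n) (Fin n) ℝ := fun g => ∑ i, g i • S i with hMdef
  have hMsymm : ∀ g, (M g)ᵀ = M g := by
    intro g
    rw [hMdef]
    simp only [Matrix.transpose_sum, Matrix.transpose_smul]
    refine Finset.sum_congr rfl fun i _ => ?_
    congr 1
    simp [hSdef, Matrix.transpose_add, Matrix.transpose_transpose, add_comm]
  set Y : (Fin k → ℝ) → ℝ := fun g => (M g ^ N).trace with hYdef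
  -- trace of M^N is nonnegative
  have htr_nonneg : ∀ (B : Matrix (Fin n) (Fin n) ℝ), 0 ≤ (Bᵀ * B).trace := by
    intro B
    have : (Bᵀ * B).trace = ∑ c, ∑ r, (B r c) ^ 2 := by
      simp [Matrix.trace, Matrix.diag, Matrix.mul_apply, sq]
    rw [this]
    exact Finset.sum_nonneg fun c _ => Finset.sum_nonneg fun r _ => sq_nonneg _
  have hMN_split : ∀ g, M g ^ N = (M g ^ Nh)ᵀ * (M g ^ Nh) := by
    intro g
    rw [Matrix.transpose_pow, hMsymm g, ← pow_add, ← hNhalf]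
  have hY0 : ∀ g, 0 ≤ Y g := by
    intro g
    rw [hYdef]
    simp only
    rw [hMN_split g]
    exact htr_nonneg _
  -- monomials
  set P : (Fin N → Fin k) → Matrix (Fin n) (Fin n) ℝ :=
    fun f => (List.ofFn fun j => S (f j)).prod with hPdef
  have hPtr : ∀ f, 0 ≤ (P f).trace ∧ (P f).trace ≤ (n:ℝ) * (2 * (t:ℝ)) ^ N := by
    intro f
    have hmem := listprod_rowsum (2 * (t:ℝ)) (by positivity) (List.ofFn fun j => S (f j)) ?_
    · have hlen : (List.ofFn fun j => S (f j)).length = N := List.length_ofFn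
      constructor
      · exact Finset.sum_nonneg fun r _ => hmem.1 r r
      · calc (P f).trace = ∑ r, P f r r := rfl
          _ ≤ ∑ r : Fin n, (2 * (t:ℝ)) ^ N := by
              refine Finset.sum_le_sum fun r _ => ?_
              calc P f r r ≤ ∑ c, P f r c :=
                    Finset.single_le_sum (fun c _ => hmem.1 r c) (Finset.mem_univ r)
                _ ≤ (2 * (t:ℝ)) ^ (List.ofFn fun j => S (f j)).length := hmem.2 r
                _ = (2 * (t:ℝ)) ^ N := by rw [hlen]
          _ = (n:ℝ) * (2 * (t:ℝ)) ^ N := by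
              rw [Finset.sum_const, Finset.card_univ, Fintype.card_fin, nsmul_eq_mul]
    · intro B hB
      obtain ⟨j, hj⟩ := List.mem_ofFn.mp hB
      exact hj ▸ ⟨hS0 (f j), hSrow (f j)⟩
  have hYexp : ∀ g, Y g = ∑ f : Fin N → Fin k, (∏ j, g (f j)) * (P f).trace := by
    intro g
    rw [hYdef]
    simp only
    rw [hMdef]
    simp only
    rw [pow_expand S g N, Matrix.trace_sum]
    refine Finset.sum_congr rfl fun f _ => ?_
    rw [Matrix.trace_smul, smul_eq_mul]
  -- multiplicities and integrability of monomials
  set mexp : (Fin N → Fin k) → Fin k → ℕ :=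
    fun f i => (Finset.univ.filter fun j => f j = i).card with hmexpdef
  have hfib : ∀ (f : Fin N → Fin k) (g : Fin k → ℝ),
      ∏ j, g (f j) = ∏ i, (g i) ^ (mexp f i) := by
    intro f g
    rw [← Finset.prod_fiberwise_of_maps_to (fun j _ => Finset.mem_univ (f j)) (fun j => g (f j))]
    refine Finset.prod_congr rfl fun i _ => ?_
    rw [Finset.prod_congr rfl (fun j hj => by rw [(Finset.mem_filter.mp hj).2]),
      Finset.prod_const]
  have hmono_int : ∀ f : Fin N → Fin k, Integrable (fun g => ∏ j, g (f j)) μ := by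
    intro f
    have heqf : (fun g : Fin k → ℝ => ∏ j, g (f j)) = fun g => ∏ i, (g i) ^ (mexp f i) :=
      funext fun g => hfib f g
    rw [heqf, hμ]
    exact integrable_prod_gauss fun i => integrable_pow_gauss (mexp f i)
  have hmom : ∀ f : Fin N → Fin k, 0 ≤ ∫ g, (∏ j, g (f j)) ∂μ := by
    intro f
    have heqf : (fun g : Fin k → ℝ => ∏ j, g (f j)) = fun g => ∏ i, (g i) ^ (mexp f i) :=
      funext fun g => hfib f g
    rw [heqf, hμ, integral_prod_gauss (fun i (x:ℝ) => x ^ (mexp f i))]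
    exact Finset.prod_nonneg fun i _ => moment_nonneg (mexp f i)
  have hYint : Integrable Y μ := by
    rw [show Y = fun g => ∑ f : Fin N → Fin k, (∏ j, g (f j)) * (P f).trace from
      funext hYexp]
    exact integrable_finset_sum _ fun f _ => (hmono_int f).mul_const _
  -- expansion of (∑ g)^N
  have hexp_sum : ∀ g : Fin k → ℝ, (∑ i, g i) ^ N = ∑ f : Fin N → Fin k, ∏ j, g (f j) := by
    intro g
    calc (∑ i, g i) ^ N = ∏ _j : Fin N, (∑ i, g i) := by
          rw [Finset.prod_const, Finset.card_univ, Fintype.card_fin]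
      _ = ∑ f ∈ Fintype.piFinset (fun _ : Fin N => (Finset.univ : Finset (Fin k))),
            ∏ j, g (f j) := Finset.prod_univ_sum _ _
      _ = ∑ f : Fin N → Fin k, ∏ j, g (f j) := by rw [Fintype.piFinset_univ]
  have hsum_int : Integrable (fun g : Fin k → ℝ => (∑ i, g i) ^ N) μ := by
    rw [show (fun g : Fin k → ℝ => (∑ i, g i) ^ N)
        = fun g => ∑ f : Fin N → Fin k, ∏ j, g (f j) from funext hexp_sum]
    exact integrable_finset_sum _ fun f _ => hmono_int f
  -- bound on E[Y]
  have hEY : ∫ g, Y g ∂μ ≤ (n:ℝ) * (2 * (t:ℝ)) ^ N * ∫ g, (∑ i, g i) ^ N ∂μ := by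
    rw [show Y = fun g => ∑ f : Fin N → Fin k, (∏ j, g (f j)) * (P f).trace from
      funext hYexp]
    rw [integral_finset_sum _ fun f _ => (hmono_int f).mul_const _]
    have h1 : ∀ f : Fin N → Fin k,
        ∫ g, (∏ j, g (f j)) * (P f).trace ∂μ
          = (∫ g, (∏ j, g (f j)) ∂μ) * (P f).trace := fun f => integral_mul_const _ _
    calc ∑ f : Fin N → Fin k, ∫ g, (∏ j, g (f j)) * (P f).trace ∂μ
        = ∑ f : Fin N → Fin k, (∫ g, (∏ j, g (f j)) ∂μ) * (P f).trace := by
          exact Finset.sum_congr rfl fun f _ => h1 f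
      _ ≤ ∑ f : Fin N → Fin k, (∫ g, (∏ j, g (f j)) ∂μ) * ((n:ℝ) * (2 * (t:ℝ)) ^ N) := by
          refine Finset.sum_le_sum fun f _ => ?_
          exact mul_le_mul_of_nonneg_left (hPtr f).2 (hmom f)
      _ = (∑ f : Fin N → Fin k, ∫ g, (∏ j, g (f j)) ∂μ) * ((n:ℝ) * (2 * (t:ℝ)) ^ N) := by
          rw [Finset.sum_mul]
      _ = (∫ g, (∑ i, g i) ^ N ∂μ) * ((n:ℝ) * (2 * (t:ℝ)) ^ N) := by
          congr 1
          rw [← integral_finset_sum _ fun f _ => hmono_int f]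
          refine integral_congr_ae (ae_of_all _ fun g => ?_)
          exact (hexp_sum g).symm
      _ = (n:ℝ) * (2 * (t:ℝ)) ^ N * ∫ g, (∑ i, g i) ^ N ∂μ := by ring
  -- moment bound for the sum of gaussians
  have hkR : (0:ℝ) < (k:ℝ) := by exact_mod_cast hkpos
  have hNR : (0:ℝ) < (N:ℝ) := by
    have : 0 < N := by omega
    exact_mod_cast this
  set lam : ℝ := Real.sqrt ((N:ℝ) / k) with hlamdef
  have hlam : 0 < lam := Real.sqrt_pos.mpr (by positivity)
  have hexp_prod : ∀ c : ℝ,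
      (fun g : Fin k → ℝ => Real.exp (c * ∑ i, g i))
        = fun g : Fin k → ℝ => ∏ i, Real.exp (c * g i) := by
    intro c
    funext g
    rw [Finset.mul_sum, Real.exp_sum]
  have hexp_int : ∀ c : ℝ, Integrable (fun g : Fin k → ℝ => Real.exp (c * ∑ i, g i)) μ := by
    intro c
    rw [hexp_prod c, hμ]
    exact integrable_prod_gauss fun _ => integrable_exp_gauss c
  have hexp_val : ∀ c : ℝ,
      ∫ g, Real.exp (c * ∑ i, g i) ∂μ = Real.exp (c ^ 2 / 2) ^ k := by
    intro c
    rw [hexp_prod c, hμ, integral_prod_gauss (fun _ (x:ℝ) => Real.exp (c * x))]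
    simp [integral_exp_gauss c]
  have hlamsq : lam ^ 2 = (N:ℝ) / k := Real.sq_sqrt (by positivity)
  have hexp_valN : Real.exp (lam ^ 2 / 2) ^ k = Real.exp 1 ^ Nh := by
    rw [← Real.exp_nat_mul, ← Real.exp_nat_mul, hlamsq]
    congr 1
    have hNhR : (N:ℝ) = 2 * (Nh:ℝ) := by exact_mod_cast hNdef
    have hkne : (k:ℝ) ≠ 0 := ne_of_gt hkR
    rw [hNhR]
    field_simp
  have hsum_bound : ∫ g, (∑ i, g i) ^ N ∂μ
      ≤ 2 * (Real.exp 1 * N * k) ^ Nh := by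
    have hpt : ∀ g : Fin k → ℝ, (∑ i, g i) ^ N
        ≤ (N.factorial : ℝ) / lam ^ N *
          (Real.exp (lam * ∑ i, g i) + Real.exp (-(lam * ∑ i, g i))) :=
      fun g => pow_le_exp_pair hNeven hlam _
    have hint2 : Integrable (fun g : Fin k → ℝ =>
        (N.factorial : ℝ) / lam ^ N *
          (Real.exp (lam * ∑ i, g i) + Real.exp (-(lam * ∑ i, g i)))) μ := by
      refine Integrable.const_mul ?_ _
      have h2 : (fun g : Fin k → ℝ => Real.exp (-(lam * ∑ i, g i)))
          = fun g : Fin k → ℝ => Real.exp ((-lam) * ∑ i, g i) := by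
        funext g; rw [neg_mul]
      exact (hexp_int lam).add (by rw [h2]; exact hexp_int (-lam))
    have h3 := integral_mono hsum_int hint2 hpt
    have h4 : ∫ g, ((N.factorial : ℝ) / lam ^ N *
        (Real.exp (lam * ∑ i, g i) + Real.exp (-(lam * ∑ i, g i)))) ∂μ
        = (N.factorial : ℝ) / lam ^ N * (Real.exp 1 ^ Nh + Real.exp 1 ^ Nh) := by
      rw [integral_const_mul]
      congr 1
      have h2 : (fun g : Fin k → ℝ => Real.exp (-(lam * ∑ i, g i)))
          = fun g : Fin k → ℝ => Real.exp ((-lam) * ∑ i, g i) := by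
        funext g; rw [neg_mul]
      rw [integral_add (hexp_int lam) (by rw [h2]; exact hexp_int (-lam))]
      rw [hexp_val lam, h2, hexp_val (-lam)]
      rw [show ((-lam) ^ 2 : ℝ) = lam ^ 2 by ring, hexp_valN]
    have h5 : (N.factorial : ℝ) / lam ^ N * (Real.exp 1 ^ Nh + Real.exp 1 ^ Nh)
        ≤ 2 * (Real.exp 1 * N * k) ^ Nh := by
      have hlamN : lam ^ N = ((N:ℝ) / k) ^ Nh := by
        rw [hNdef, pow_mul, hlamsq]
      have hposd : (0:ℝ) < ((N:ℝ) / k) ^ Nh := by positivity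
      have hfact : (N.factorial : ℝ) ≤ ((N:ℝ) ^ 2) ^ Nh := by
        rw [← pow_mul]
        have h6 : (N.factorial : ℝ) ≤ (N:ℝ) ^ N := by
          exact_mod_cast Nat.factorial_le_pow N
        rw [show 2 * Nh = N from (hNdef).symm]
        exact h6
      have hcomb : (Real.exp 1 * N * k) ^ Nh * ((N:ℝ) / k) ^ Nh
          = Real.exp 1 ^ Nh * ((N:ℝ) ^ 2) ^ Nh := by
        rw [← mul_pow, ← mul_pow]
        congr 1
        field_simp
      rw [hlamN, div_mul_eq_mul_div, div_le_iff₀ hposd]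
      have hexp1 : (0:ℝ) < Real.exp 1 ^ Nh := by positivity
      calc (N.factorial : ℝ) * (Real.exp 1 ^ Nh + Real.exp 1 ^ Nh)
          = 2 * (Real.exp 1 ^ Nh * (N.factorial : ℝ)) := by ring
        _ ≤ 2 * (Real.exp 1 ^ Nh * ((N:ℝ) ^ 2) ^ Nh) := by
            refine mul_le_mul_of_nonneg_left ?_ (by norm_num)
            exact mul_le_mul_of_nonneg_left hfact hexp1.le
        _ = 2 * ((Real.exp 1 * N * k) ^ Nh * ((N:ℝ) / k) ^ Nh) := by rw [hcomb]
        _ = 2 * (Real.exp 1 * N * k) ^ Nh * ((N:ℝ) / k) ^ Nh := by ring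
    calc ∫ g, (∑ i, g i) ^ N ∂μ
        ≤ ∫ g, ((N.factorial : ℝ) / lam ^ N *
            (Real.exp (lam * ∑ i, g i) + Real.exp (-(lam * ∑ i, g i)))) ∂μ := h3
      _ = (N.factorial : ℝ) / lam ^ N * (Real.exp 1 ^ Nh + Real.exp 1 ^ Nh) := h4
      _ ≤ 2 * (Real.exp 1 * N * k) ^ Nh := h5
  -- the value V bounding E[Y]
  set V : ℝ := (n:ℝ) * (2 * (t:ℝ)) ^ N * (2 * (Real.exp 1 * N * k) ^ Nh) with hVdef
  have htR : (0:ℝ) < (t:ℝ) := by exact_mod_cast htpos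
  have hnR : (0:ℝ) < (n:ℝ) := by positivity
  have hVpos : 0 < V := by
    rw [hVdef]
    positivity
  have hEYV : ∫ g, Y g ∂μ ≤ V := by
    rw [hVdef]
    calc ∫ g, Y g ∂μ ≤ (n:ℝ) * (2 * (t:ℝ)) ^ N * ∫ g, (∑ i, g i) ^ N ∂μ := hEY
      _ ≤ (n:ℝ) * (2 * (t:ℝ)) ^ N * (2 * (Real.exp 1 * N * k) ^ Nh) := by
          refine mul_le_mul_of_nonneg_left hsum_bound (by positivity)
  obtain ⟨hroot_int, hroot_le⟩ := integral_root_le hYint hY0 hVpos hEYV hN1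
  -- pointwise bound of the supremum
  have hsup : ∀ g : Fin k → ℝ,
      (Finset.univ.sup' Finset.univ_nonempty fun x : Fin n → Bool => F x g)
        ≤ ((n:ℝ) / 2) * (Y g) ^ ((N:ℝ)⁻¹) := by
    intro g
    refine Finset.sup'_le _ _ fun x _ => ?_
    set xv : Fin n → ℝ := fun j => if x j then (1:ℝ) else 0 with hxvdef
    have hxv01 : ∀ j, xv j = 0 ∨ xv j = 1 := by
      intro j; by_cases h : x j <;> simp [hxvdef, h]
    have hxx0 : 0 ≤ xv ⬝ᵥ xv := dot_nonneg xv
    have hxx_le : xv ⬝ᵥ xv ≤ (n:ℝ) := by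
      calc xv ⬝ᵥ xv = ∑ j, xv j * xv j := rfl
        _ ≤ ∑ _j : Fin n, (1:ℝ) := Finset.sum_le_sum fun j _ => by
              rcases hxv01 j with h | h <;> simp [h]
        _ = (n:ℝ) := by simp
    have hcoef : ∀ i : Fin k,
        (∑ r, ∑ c, A i r c * (if x c then (1:ℝ) else 0) * (if x r then (1:ℝ) else 0))
          = xv ⬝ᵥ (A i).mulVec xv := by
      intro i
      calc ∑ r, ∑ c, A i r c * (if x c then (1:ℝ) else 0) * (if x r then (1:ℝ) else 0)
          = ∑ r, xv r * ((A i).mulVec xv r) := by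
            refine Finset.sum_congr rfl fun r _ => ?_
            have : (A i).mulVec xv r = ∑ c, A i r c * xv c := rfl
            rw [this, Finset.mul_sum]
            refine Finset.sum_congr rfl fun c _ => ?_
            simp only [hxvdef]
            ring
        _ = xv ⬝ᵥ (A i).mulVec xv := rfl
    have hSx : ∀ i : Fin k, xv ⬝ᵥ (S i).mulVec xv = 2 * (xv ⬝ᵥ (A i).mulVec xv) := by
      intro i
      have hS_eq : S i = A i + (A i)ᵀ := by rw [hSdef]
      rw [hS_eq, Matrix.add_mulVec, dotProduct_add]
      have h2 : xv ⬝ᵥ (A i)ᵀ.mulVec xv = xv ⬝ᵥ (A i).mulVec xv := by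
        rw [Matrix.dotProduct_mulVec, Matrix.vecMul_transpose, dotProduct_comm]
      rw [h2]; ring
    have hmvr : ∀ r, (∑ i, g i • S i).mulVec xv r = ∑ i, g i * ((S i).mulVec xv r) := by
      intro r
      have h1 : (∑ i, g i • S i).mulVec xv r = ∑ c, (∑ i, g i * S i r c) * xv c := by
        simp [Matrix.mulVec, dotProduct, Finset.sum_apply, Matrix.smul_apply,
          Matrix.sum_apply, smul_eq_mul]
      rw [h1]
      calc ∑ c, (∑ i, g i * S i r c) * xv c
          = ∑ c, ∑ i, g i * S i r c * xv c :=
            Finset.sum_congr rfl fun c _ => Finset.sum_mul _ _ _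
        _ = ∑ i, ∑ c, g i * S i r c * xv c := Finset.sum_comm
        _ = ∑ i, g i * ((S i).mulVec xv r) := by
            refine Finset.sum_congr rfl fun i _ => ?_
            have h2 : (S i).mulVec xv r = ∑ c, S i r c * xv c := rfl
            rw [h2, Finset.mul_sum]
            exact Finset.sum_congr rfl fun c _ => by ring
    have hMg : xv ⬝ᵥ (M g).mulVec xv = ∑ i, g i * (xv ⬝ᵥ (S i).mulVec xv) := by
      have hM_eq : M g = ∑ i, g i • S i := by rw [hMdef]
      rw [hM_eq]
      calc xv ⬝ᵥ (∑ i, g i • S i).mulVec xv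
          = ∑ r, xv r * ((∑ i, g i • S i).mulVec xv r) := rfl
        _ = ∑ r, ∑ i, xv r * (g i * ((S i).mulVec xv r)) := by
            refine Finset.sum_congr rfl fun r _ => ?_
            rw [hmvr r, Finset.mul_sum]
        _ = ∑ i, ∑ r, xv r * (g i * ((S i).mulVec xv r)) := Finset.sum_comm
        _ = ∑ i, g i * (xv ⬝ᵥ (S i).mulVec xv) := by
            refine Finset.sum_congr rfl fun i _ => ?_
            have h4 : xv ⬝ᵥ (S i).mulVec xv = ∑ r, xv r * ((S i).mulVec xv r) := rfl
            rw [h4, Finset.mul_sum]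
            exact Finset.sum_congr rfl fun r _ => by ring
    have hFval : F x g = (xv ⬝ᵥ (M g).mulVec xv) / 2 := by
      have hF_eq : F x g = ∑ i, (xv ⬝ᵥ (A i).mulVec xv) * g i := by
        rw [hF]
        refine Finset.sum_congr rfl fun i _ => ?_
        rw [hcoef i]
      rw [hF_eq, hMg, Finset.sum_div]
      refine Finset.sum_congr rfl fun i _ => ?_
      rw [hSx i]
      ring
    have hq := cs_iter (M g) (hMsymm g) xv (Nat.log 2 L + 2) (by omega)
    rw [← hNpow] at hq
    have hq2 : xv ⬝ᵥ (M g ^ N).mulVec xv ≤ (xv ⬝ᵥ xv) * Y g := by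
      have hYg : Y g = (M g ^ N).trace := by rw [hYdef]
      rw [hYg]
      have h5 := quad_le_trace (M g ^ Nh) xv
      rw [← hMN_split g] at h5
      exact h5
    have hpowN : (xv ⬝ᵥ (M g).mulVec xv) ^ N ≤ (n:ℝ) ^ N * Y g := by
      have hstep : (xv ⬝ᵥ xv) ^ (N - 1) * (xv ⬝ᵥ (M g ^ N).mulVec xv)
          ≤ (xv ⬝ᵥ xv) ^ N * Y g := by
        calc (xv ⬝ᵥ xv) ^ (N - 1) * (xv ⬝ᵥ (M g ^ N).mulVec xv)
            ≤ (xv ⬝ᵥ xv) ^ (N - 1) * ((xv ⬝ᵥ xv) * Y g) :=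
              mul_le_mul_of_nonneg_left hq2 (pow_nonneg hxx0 _)
          _ = (xv ⬝ᵥ xv) ^ N * Y g := by
              rw [← mul_assoc, ← pow_succ]
              have hN1' : N - 1 + 1 = N := by omega
              rw [hN1']
      calc (xv ⬝ᵥ (M g).mulVec xv) ^ N
          ≤ (xv ⬝ᵥ xv) ^ (N - 1) * (xv ⬝ᵥ (M g ^ N).mulVec xv) := hq
        _ ≤ (xv ⬝ᵥ xv) ^ N * Y g := hstep
        _ ≤ (n:ℝ) ^ N * Y g :=
            mul_le_mul_of_nonneg_right (pow_le_pow_left₀ hxx0 hxx_le N) (hY0 g)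
    have habs : |xv ⬝ᵥ (M g).mulVec xv| ≤ (n:ℝ) * (Y g) ^ ((N:ℝ)⁻¹) := by
      have h2 : (|xv ⬝ᵥ (M g).mulVec xv|) ^ N = (xv ⬝ᵥ (M g).mulVec xv) ^ N :=
        hNeven.pow_abs _
      have h1 : |xv ⬝ᵥ (M g).mulVec xv| = ((|xv ⬝ᵥ (M g).mulVec xv|) ^ N) ^ ((N:ℝ)⁻¹) :=
        (Real.pow_rpow_inv_natCast (abs_nonneg _) hNne).symm
      rw [h1, h2]
      calc ((xv ⬝ᵥ (M g).mulVec xv) ^ N) ^ ((N:ℝ)⁻¹)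
          ≤ ((n:ℝ) ^ N * Y g) ^ ((N:ℝ)⁻¹) := by
            refine Real.rpow_le_rpow ?_ hpowN (by positivity)
            rw [← h2]; positivity
        _ = ((n:ℝ) ^ N) ^ ((N:ℝ)⁻¹) * (Y g) ^ ((N:ℝ)⁻¹) :=
            Real.mul_rpow (by positivity) (hY0 g)
        _ = (n:ℝ) * (Y g) ^ ((N:ℝ)⁻¹) := by
            rw [Real.pow_rpow_inv_natCast (by positivity) hNne]
    have hy_nonneg : (0:ℝ) ≤ (Y g) ^ ((N:ℝ)⁻¹) := Real.rpow_nonneg (hY0 g) _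
    calc F x g = (xv ⬝ᵥ (M g).mulVec xv) / 2 := hFval
      _ ≤ |xv ⬝ᵥ (M g).mulVec xv| / 2 := by
          have := le_abs_self (xv ⬝ᵥ (M g).mulVec xv)
          linarith
      _ ≤ ((n:ℝ) * (Y g) ^ ((N:ℝ)⁻¹)) / 2 := by linarith [habs]
      _ = ((n:ℝ) / 2) * (Y g) ^ ((N:ℝ)⁻¹) := by ring
  -- integrability of the supremum
  have hint_bound : Integrable (fun g => ((n:ℝ)/2) * (Y g) ^ ((N:ℝ)⁻¹)) μ :=
    hroot_int.const_mul _
  have hZ0 : ∀ g, 0 ≤ Finset.univ.sup' Finset.univ_nonempty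
      fun x : Fin n → Bool => F x g := by
    intro g
    refine le_trans ?_ (Finset.le_sup' (fun x : Fin n → Bool => F x g)
      (Finset.mem_univ (fun _ : Fin n => false)))
    rw [hF]
    simp
  have hZmeas : AEStronglyMeasurable (fun g => Finset.univ.sup' Finset.univ_nonempty
      fun x : Fin n → Bool => F x g) μ := by
    have hmeasx : ∀ x : Fin n → Bool, Measurable (F x) := by
      intro x
      rw [hF]
      simp only
      refine Finset.measurable_sum _ fun i _ => ?_
      exact (measurable_pi_apply i).const_mul _
    have heq : (fun g => Finset.univ.sup' Finset.univ_nonempty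
        fun x : Fin n → Bool => F x g)
        = Finset.univ.sup' Finset.univ_nonempty F := by
      funext g
      exact (Finset.sup'_apply _ _ _).symm
    rw [heq]
    exact (Finset.measurable_sup' _ fun x _ => hmeasx x).aestronglyMeasurable
  have hZint : Integrable (fun g => Finset.univ.sup' Finset.univ_nonempty
      fun x : Fin n → Bool => F x g) μ := by
    refine hint_bound.mono' hZmeas (ae_of_all _ fun g => ?_)
    rw [Real.norm_eq_abs, abs_of_nonneg (hZ0 g)]
    exact hsup g
  have hfinal1 : (∫ g, (Finset.univ.sup' Finset.univ_nonempty
      fun x : Fin n → Bool => F x g) ∂μ) ≤ ((n:ℝ)/2) * V ^ ((N:ℝ)⁻¹) := by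
    calc (∫ g, (Finset.univ.sup' Finset.univ_nonempty
          fun x : Fin n → Bool => F x g) ∂μ)
        ≤ ∫ g, ((n:ℝ)/2) * (Y g) ^ ((N:ℝ)⁻¹) ∂μ := integral_mono hZint hint_bound hsup
      _ = ((n:ℝ)/2) * ∫ g, (Y g) ^ ((N:ℝ)⁻¹) ∂μ := integral_const_mul _ _
      _ ≤ ((n:ℝ)/2) * V ^ ((N:ℝ)⁻¹) := mul_le_mul_of_nonneg_left hroot_le (by positivity)
  -- final numeric estimate
  have hNhpos : (0:ℝ) < (Nh:ℝ) := by
    have : 0 < Nh := by omega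
    exact_mod_cast this
  have hEpos : (0:ℝ) < Real.exp 1 * N * k := by positivity
  have hVre : V = (2*(n:ℝ)) * ((2*(t:ℝ))^N) * ((Real.exp 1 * N * k)^Nh) := by
    rw [hVdef]; ring
  have hhalf : (Nh:ℝ) * (N:ℝ)⁻¹ = 1/2 := by
    have hNhR : (N:ℝ) = 2 * (Nh:ℝ) := by exact_mod_cast hNdef
    rw [hNhR]
    field_simp
  have h1 : V ^ ((N:ℝ)⁻¹)
      = ((2*(n:ℝ)) ^ ((N:ℝ)⁻¹)) * (2*(t:ℝ)) * Real.sqrt (Real.exp 1 * N * k) := by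
    rw [hVre, Real.mul_rpow (by positivity) (by positivity),
      Real.mul_rpow (by positivity) (by positivity),
      Real.pow_rpow_inv_natCast (by positivity) hNne]
    congr 1
    rw [← Real.rpow_natCast (Real.exp 1 * (N:ℝ) * (k:ℝ)) Nh, ← Real.rpow_mul hEpos.le,
      hhalf, Real.sqrt_eq_rpow]
  have h2 : (2*(n:ℝ)) ^ ((N:ℝ)⁻¹) ≤ Real.exp 2 := by
    have h2n : (2*(n:ℝ)) ≤ (n:ℝ)^(2:ℕ) := by
      have hn2R : (2:ℝ) ≤ (n:ℝ) := by exact_mod_cast hn2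
      nlinarith [hn2R, sq_nonneg ((n:ℝ) - 2)]
    calc (2*(n:ℝ)) ^ ((N:ℝ)⁻¹) ≤ ((n:ℝ)^(2:ℕ)) ^ ((N:ℝ)⁻¹) :=
          Real.rpow_le_rpow (by positivity) h2n (by positivity)
      _ = (n:ℝ) ^ ((2:ℝ) * (N:ℝ)⁻¹) := by
          rw [← Real.rpow_natCast (n:ℝ) 2, ← Real.rpow_mul hnR.le]
          norm_num
      _ = Real.exp (Real.log n * ((2:ℝ) * (N:ℝ)⁻¹)) := Real.rpow_def_of_pos hnR _
      _ ≤ Real.exp 2 := by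
          refine Real.exp_le_exp.mpr ?_
          have hd : Real.log n * (N:ℝ)⁻¹ ≤ 1 := by
            rw [← div_eq_mul_inv, div_le_one hNR]
            exact hNge
          nlinarith [hlogn_pos, hNR]
  have h3 : Real.sqrt (Real.exp 1 * N * k) ≤ 5 * Real.sqrt ((k:ℝ) * Real.log n) := by
    have he : Real.exp 1 < 2.7182818286 := Real.exp_one_lt_d9
    have hE1 : Real.exp 1 * N * k ≤ 25 * ((k:ℝ) * Real.log n) := by
      have hmul := mul_le_mul_of_nonneg_left hNle
        (mul_pos (Real.exp_pos 1) hkR).le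
      nlinarith [hkR, hlogn_pos, Real.exp_pos 1]
    calc Real.sqrt (Real.exp 1 * N * k) ≤ Real.sqrt (25 * ((k:ℝ) * Real.log n)) :=
          Real.sqrt_le_sqrt hE1
      _ = 5 * Real.sqrt ((k:ℝ) * Real.log n) := by
          rw [Real.sqrt_mul (by norm_num) _]
          congr 1
          rw [show (25:ℝ) = 5^2 by norm_num, Real.sqrt_sq (by norm_num)]
  have hfinal2 : ((n:ℝ)/2) * V ^ ((N:ℝ)⁻¹)
      ≤ 100 * ((t:ℝ) * n) * Real.sqrt ((k:ℝ) * Real.log n) := by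
    rw [h1]
    have hb1 : ((2*(n:ℝ)) ^ ((N:ℝ)⁻¹)) * (2*(t:ℝ)) * Real.sqrt (Real.exp 1 * N * k)
        ≤ Real.exp 2 * (2*(t:ℝ)) * (5 * Real.sqrt ((k:ℝ) * Real.log n)) := by
      have s0 : 0 ≤ Real.sqrt (Real.exp 1 * N * k) := Real.sqrt_nonneg _
      have e0 : 0 ≤ Real.exp 2 := (Real.exp_pos 2).le
      have t0 : (0:ℝ) ≤ 2*(t:ℝ) := by positivity
      calc ((2*(n:ℝ)) ^ ((N:ℝ)⁻¹)) * (2*(t:ℝ)) * Real.sqrt (Real.exp 1 * N * k)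
          ≤ Real.exp 2 * (2*(t:ℝ)) * Real.sqrt (Real.exp 1 * N * k) := by
            refine mul_le_mul_of_nonneg_right
              (mul_le_mul_of_nonneg_right h2 t0) s0
        _ ≤ Real.exp 2 * (2*(t:ℝ)) * (5 * Real.sqrt ((k:ℝ) * Real.log n)) := by
            refine mul_le_mul_of_nonneg_left h3 (by positivity)
    have he2 : Real.exp 2 ≤ 8 := by
      have hexp2 : Real.exp 2 = Real.exp 1 * Real.exp 1 := by
        rw [← Real.exp_add]; norm_num
      nlinarith [Real.exp_one_lt_d9, Real.exp_pos 1]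
    have hchain : ((n:ℝ)/2) * (Real.exp 2 * (2*(t:ℝ)) * (5 * Real.sqrt ((k:ℝ) * Real.log n)))
        ≤ 100 * ((t:ℝ) * n) * Real.sqrt ((k:ℝ) * Real.log n) := by
      have hLHS : ((n:ℝ)/2) * (Real.exp 2 * (2*(t:ℝ)) * (5 * Real.sqrt ((k:ℝ) * Real.log n)))
          = (5 * Real.exp 2) * ((t:ℝ) * n * Real.sqrt ((k:ℝ) * Real.log n)) := by ring
      have hRHS : 100 * ((t:ℝ) * n) * Real.sqrt ((k:ℝ) * Real.log n)
          = 100 * ((t:ℝ) * n * Real.sqrt ((k:ℝ) * Real.log n)) := by ring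
      rw [hLHS, hRHS]
      refine mul_le_mul_of_nonneg_right (by nlinarith) (by positivity)
    calc ((n:ℝ)/2) * (((2*(n:ℝ)) ^ ((N:ℝ)⁻¹)) * (2*(t:ℝ)) * Real.sqrt (Real.exp 1 * N * k))
        ≤ ((n:ℝ)/2) * (Real.exp 2 * (2*(t:ℝ)) * (5 * Real.sqrt ((k:ℝ) * Real.log n))) :=
          mul_le_mul_of_nonneg_left hb1 (by positivity)
      _ ≤ 100 * ((t:ℝ) * n) * Real.sqrt ((k:ℝ) * Real.log n) := hchain
  exact le_trans hfinal1 hfinal2
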